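/- Let κ > 0, β > 0, and c ∈ (0, 1]. Let F(η) = β·cosh η − log I₀(R(η)) + log I₀(κ) with R(η) = √(κ² + β²·sinh²η + 2κβ·sinh η·c), and for η > 0 set h(η) = 2·√(β⁻¹·(I₁(κ)/I₀(κ))·η·c). Then as η → 0⁺, F(η) = β − log I₀(β·h(η)) + O(η²); that is, the function η ↦ F(η) − β + log I₀(β·h(η)) is O(η²) as η → 0⁺. In other words, after tuning the field strength h(η), the photon free energy agrees with β plus the rotor free energy F_rot(h(η), β) = −log I₀(β·h(η)) up to O(η²). -/

import Mathlib

noncomputable section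

open Real

/-- The modified Bessel function of the first kind `I₀`. -/
def besselI0 (x : ℝ) : ℝ := (1 / (2 * π)) * ∫ θ in (0:ℝ)..(2 * π), Real.exp (x * Real.cos θ)

/-- The modified Bessel function of the first kind `I₁`. -/
def besselI1 (x : ℝ) : ℝ :=
  (1 / (2 * π)) * ∫ θ in (0:ℝ)..(2 * π), Real.exp (x * Real.cos θ) * Real.cos θ

open MeasureTheory Filter Asymptotics intervalIntegral


/-- `∫ θ in 0..2π, cos θ ^ n`. -/
def Wc (n : ℕ) : ℝ := ∫ θ in (0:ℝ)..(2*π), Real.cos θ ^ n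

lemma Wc_zero : Wc 0 = 2 * π := by simp [Wc]

lemma Wc_one : Wc 1 = 0 := by simp [Wc, integral_cos]

lemma Wc_rec (n : ℕ) : Wc (n + 2) = (n + 1) / (n + 2) * Wc n := by
  rw [Wc, integral_cos_pow]
  simp [Real.sin_two_pi, Wc]

lemma Wc_odd (m : ℕ) : Wc (2 * m + 1) = 0 := by
  induction m with
  | zero => simpa using Wc_one
  | succ k ih =>
    have : 2 * (k + 1) + 1 = (2 * k + 1) + 2 := by ring
    rw [this, Wc_rec, ih, mul_zero]

lemma Wc_even (m : ℕ) :
    Wc (2 * m) = 2 * π * (Nat.factorial (2 * m)) / (4 ^ m * (Nat.factorial m) ^ 2) := by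
  induction m with
  | zero => simpa using Wc_zero
  | succ k ih =>
    have h2 : 2 * (k + 1) = (2 * k) + 2 := by ring
    rw [h2, Wc_rec, ih]
    have e1 : Nat.factorial (2 * k + 2) = (2 * k + 2) * ((2 * k + 1) * Nat.factorial (2 * k)) := by
      rw [Nat.factorial_succ, Nat.factorial_succ]
    have e2 : Nat.factorial (k + 1) = (k + 1) * Nat.factorial k := Nat.factorial_succ k
    have hne : (Nat.factorial (2 * k) : ℝ) ≠ 0 := by positivity
    have hk : ((k : ℝ) + 1) ≠ 0 := by positivity
    rw [e1, e2]
    push_cast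
    field_simp
    ring

lemma exchange (x : ℝ) (k : ℕ) :
    (∫ θ in (0:ℝ)..(2*π), Real.exp (x * Real.cos θ) * Real.cos θ ^ k)
      = ∑' n : ℕ, (x ^ n / n.factorial) * Wc (n + k) := by
  have h2π : (0:ℝ) ≤ 2 * π := Real.two_pi_pos.le
  have key : ∀ θ : ℝ, Real.exp (x * Real.cos θ) * Real.cos θ ^ k
      = ∑' n : ℕ, (x ^ n / n.factorial) * Real.cos θ ^ (n + k) := by
    intro θ
    have h1 : Real.exp (x * Real.cos θ) = ∑' n : ℕ, (x * Real.cos θ) ^ n / n.factorial := by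
      rw [Real.exp_eq_exp_ℝ, NormedSpace.exp_eq_tsum_div]
    rw [h1, ← tsum_mul_right]
    refine tsum_congr fun n => ?_
    rw [mul_pow, pow_add]
    ring
  have hsum : ∀ θ : ℝ, Summable fun n : ℕ => (x ^ n / n.factorial) * Real.cos θ ^ (n + k) := by
    intro θ
    apply Summable.of_norm_bounded (Real.summable_pow_div_factorial |x|)
    intro n
    rw [norm_mul, norm_div]
    calc ‖x ^ n‖ / ‖(n.factorial : ℝ)‖ * ‖Real.cos θ ^ (n + k)‖
        ≤ |x| ^ n / n.factorial * 1 := by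
          gcongr
          · simp [abs_pow]
          · simp
          · rw [norm_pow]
            exact pow_le_one₀ (norm_nonneg _) (by simpa using Real.abs_cos_le_one θ)
      _ = |x| ^ n / n.factorial := mul_one _
  calc (∫ θ in (0:ℝ)..(2*π), Real.exp (x * Real.cos θ) * Real.cos θ ^ k)
      = ∫ θ in Set.Ioc (0:ℝ) (2*π),
          (∑' n : ℕ, (x ^ n / n.factorial) * Real.cos θ ^ (n + k)) := by
        rw [intervalIntegral.integral_of_le h2π]
        exact setIntegral_congr_fun measurableSet_Ioc fun θ _ => key θ
    _ = ∑' n : ℕ, ∫ θ in Set.Ioc (0:ℝ) (2*π), (x ^ n / n.factorial) * Real.cos θ ^ (n + k) := by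
        refine (MeasureTheory.integral_tsum_of_summable_integral_norm (fun n => ?_) ?_).symm
        · exact (Continuous.integrableOn_Ioc (by continuity))
        · apply Summable.of_nonneg_of_le
            (fun n => integral_nonneg fun θ => norm_nonneg _)
            (fun n => ?_) ((Real.summable_pow_div_factorial |x|).mul_right ((volume (Set.Ioc (0:ℝ) (2*π))).toReal))
          calc (∫ θ in Set.Ioc (0:ℝ) (2*π), ‖(x ^ n / n.factorial) * Real.cos θ ^ (n + k)‖)
              ≤ ∫ _θ in Set.Ioc (0:ℝ) (2*π), |x| ^ n / n.factorial := by
                apply setIntegral_mono_on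
                · exact (Continuous.integrableOn_Ioc (by continuity)).norm
                · exact integrableOn_const (by simp [Real.two_pi_pos, ENNReal.mul_eq_top]) (by simp)
                · exact measurableSet_Ioc
                · intro θ _
                  rw [norm_mul, norm_div]
                  calc ‖x ^ n‖ / ‖(n.factorial : ℝ)‖ * ‖Real.cos θ ^ (n + k)‖
                      ≤ |x| ^ n / n.factorial * 1 := by
                        gcongr
                        · simp [abs_pow]
                        · simp
                        · rw [norm_pow]
                          exact pow_le_one₀ (norm_nonneg _) (by simpa using Real.abs_cos_le_one θ)
                    _ = |x| ^ n / n.factorial := mul_one _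
            _ = |x| ^ n / n.factorial * (volume (Set.Ioc (0:ℝ) (2*π))).toReal := by
                rw [setIntegral_const, smul_eq_mul, mul_comm, Measure.real]
    _ = ∑' n : ℕ, (x ^ n / n.factorial) * Wc (n + k) := by
        refine tsum_congr fun n => ?_
        rw [MeasureTheory.integral_const_mul, Wc, intervalIntegral.integral_of_le h2π]

/-- coefficients of `J`. -/
def cJ (n : ℕ) : ℝ := (((n.factorial : ℝ)) ^ 2)⁻¹
/-- coefficients of `K = J'`. -/
def cK (n : ℕ) : ℝ := ((n.factorial : ℝ) * ((n + 1).factorial : ℝ))⁻¹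

def Jfun (t : ℝ) : ℝ := ∑' n : ℕ, cJ n * t ^ n
def Kfun (t : ℝ) : ℝ := ∑' n : ℕ, cK n * t ^ n

lemma cJ_pos (n : ℕ) : 0 < cJ n := by
  have h : (0:ℝ) < n.factorial := by exact_mod_cast n.factorial_pos
  rw [cJ]; positivity
lemma cK_pos (n : ℕ) : 0 < cK n := by
  have h : (0:ℝ) < n.factorial := by exact_mod_cast n.factorial_pos
  have h2 : (0:ℝ) < (n+1).factorial := by exact_mod_cast (n+1).factorial_pos
  rw [cK]; positivity

lemma cJ_le (n : ℕ) : cJ n ≤ ((n.factorial : ℝ))⁻¹ := by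
  rw [cJ, sq]
  have h1 : (1:ℝ) ≤ (n.factorial : ℝ) := by exact_mod_cast Nat.one_le_iff_ne_zero.2 n.factorial_ne_zero
  rw [mul_inv]
  calc ((n.factorial : ℝ))⁻¹ * ((n.factorial : ℝ))⁻¹ ≤ ((n.factorial : ℝ))⁻¹ * 1 := by
        gcongr
        exact inv_le_one_of_one_le₀ h1
    _ = _ := mul_one _

lemma cK_le (n : ℕ) : cK n ≤ ((n.factorial : ℝ))⁻¹ := by
  rw [cK, mul_inv]
  have h1 : (1:ℝ) ≤ ((n+1).factorial : ℝ) := by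
    exact_mod_cast Nat.one_le_iff_ne_zero.2 (n+1).factorial_ne_zero
  calc ((n.factorial : ℝ))⁻¹ * (((n+1).factorial : ℝ))⁻¹ ≤ ((n.factorial : ℝ))⁻¹ * 1 := by
        gcongr
        exact inv_le_one_of_one_le₀ h1
    _ = _ := mul_one _

lemma summable_aux {c : ℕ → ℝ} (hc : ∀ n, 0 < c n) (hle : ∀ n, c n ≤ ((n.factorial : ℝ))⁻¹)
    (t : ℝ) : Summable fun n : ℕ => c n * t ^ n := by
  apply Summable.of_norm_bounded (Real.summable_pow_div_factorial |t|)
  intro n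
  rw [norm_mul, norm_pow, Real.norm_eq_abs, Real.norm_eq_abs, abs_of_pos (hc n), div_eq_inv_mul]
  gcongr
  exact hle n

lemma summable_J (t : ℝ) : Summable fun n : ℕ => cJ n * t ^ n := summable_aux cJ_pos cJ_le t
lemma summable_K (t : ℝ) : Summable fun n : ℕ => cK n * t ^ n := summable_aux cK_pos cK_le t

lemma Jfun_ge_one {t : ℝ} (ht : 0 ≤ t) : 1 ≤ Jfun t := by
  have h0 : cJ 0 * t ^ 0 = 1 := by simp [cJ]
  calc (1:ℝ) = cJ 0 * t ^ 0 := h0.symm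
    _ ≤ Jfun t := Summable.le_tsum (summable_J t) 0 fun i _ => mul_nonneg (cJ_pos i).le (pow_nonneg ht i)

lemma Jfun_pos {t : ℝ} (ht : 0 ≤ t) : 0 < Jfun t := lt_of_lt_of_le one_pos (Jfun_ge_one ht)

lemma Kfun_pos {t : ℝ} (ht : 0 ≤ t) : 0 < Kfun t := by
  have h0 : cK 0 * t ^ 0 = 1 := by simp [cK]
  have : (1:ℝ) ≤ Kfun t := by
    calc (1:ℝ) = cK 0 * t ^ 0 := h0.symm
      _ ≤ Kfun t := Summable.le_tsum (summable_K t) 0 fun i _ => mul_nonneg (cK_pos i).le (pow_nonneg ht i)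
  linarith

lemma summable_xnWc (x : ℝ) (k : ℕ) : Summable fun n : ℕ => (x ^ n / n.factorial) * Wc (n + k) := by
  apply Summable.of_norm_bounded ((Real.summable_pow_div_factorial |x|).mul_right (2 * π))
  intro n
  have hW : |Wc (n + k)| ≤ 2 * π := by
    rw [Wc]
    have := intervalIntegral.norm_integral_le_of_norm_le_const
      (C := 1) (f := fun θ : ℝ => Real.cos θ ^ (n+k)) (a := 0) (b := 2*π) ?_
    · rw [Real.norm_eq_abs] at this
      calc |Wc (n+k)| = |∫ θ in (0:ℝ)..(2*π), Real.cos θ ^ (n+k)| := rfl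
        _ ≤ 1 * |2*π - 0| := this
        _ = 2 * π := by rw [one_mul, sub_zero, abs_of_pos Real.two_pi_pos]
    · intro θ _
      rw [norm_pow]
      exact pow_le_one₀ (norm_nonneg _) (by simpa using Real.abs_cos_le_one θ)
  rw [norm_mul, Real.norm_eq_abs, Real.norm_eq_abs, abs_div, abs_pow,
    abs_of_nonneg (show (0:ℝ) ≤ (n.factorial:ℝ) by positivity)]
  gcongr

lemma besselI0_eq (x : ℝ) : besselI0 x = Jfun (x ^ 2 / 4) := by
  have hex : (∫ θ in (0:ℝ)..(2*π), Real.exp (x * Real.cos θ))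
      = ∑' n : ℕ, (x ^ n / n.factorial) * Wc n := by
    have h := exchange x 0
    simpa using h
  set f : ℕ → ℝ := fun n => (x ^ n / n.factorial) * Wc n with hf
  have hsum : Summable f := by simpa using summable_xnWc x 0
  have he : Summable fun m => f (2 * m) := hsum.comp_injective fun a b h => by omega
  have ho : Summable fun m => f (2 * m + 1) := hsum.comp_injective fun a b h => by omega
  have hodd : (∑' m : ℕ, f (2 * m + 1)) = 0 := by
    have h0 : ∀ m : ℕ, f (2 * m + 1) = 0 := fun m => by simp [hf, Wc_odd]
    simp [h0]
  have heven : (∑' m : ℕ, f (2 * m)) = (2 * π) * Jfun (x ^ 2 / 4) := by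
    rw [Jfun, ← tsum_mul_left]
    refine tsum_congr fun m => ?_
    have hfac : ((2*m).factorial : ℝ) ≠ 0 := Nat.cast_ne_zero.mpr (Nat.factorial_ne_zero _)
    have hmf : ((m.factorial : ℝ)) ≠ 0 := Nat.cast_ne_zero.mpr (Nat.factorial_ne_zero _)
    have h4 : (4:ℝ) ^ m ≠ 0 := by positivity
    show (x ^ (2*m) / (2*m).factorial) * Wc (2*m) = 2 * π * (cJ m * (x ^ 2 / 4) ^ m)
    rw [Wc_even, cJ, div_pow, ← pow_mul]
    field_simp
  rw [besselI0, hex, ← tsum_even_add_odd he ho, hodd, heven, add_zero]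
  have h2π : (2 * π : ℝ) ≠ 0 := by positivity
  field_simp

lemma besselI1_eq (x : ℝ) : besselI1 x = (x / 2) * Kfun (x ^ 2 / 4) := by
  have hex : (∫ θ in (0:ℝ)..(2*π), Real.exp (x * Real.cos θ) * Real.cos θ)
      = ∑' n : ℕ, (x ^ n / n.factorial) * Wc (n + 1) := by
    have h := exchange x 1
    simpa using h
  set f : ℕ → ℝ := fun n => (x ^ n / n.factorial) * Wc (n + 1) with hf
  have hsum : Summable f := by simpa using summable_xnWc x 1
  have he : Summable fun m => f (2 * m) := hsum.comp_injective fun a b h => by omega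
  have ho : Summable fun m => f (2 * m + 1) := hsum.comp_injective fun a b h => by omega
  have heven : (∑' m : ℕ, f (2 * m)) = 0 := by
    have h0 : ∀ m : ℕ, f (2 * m) = 0 := fun m => by simp [hf, Wc_odd]
    simp [h0]
  have hodd : (∑' m : ℕ, f (2 * m + 1)) = (2 * π) * ((x / 2) * Kfun (x ^ 2 / 4)) := by
    rw [Kfun, ← tsum_mul_left, ← tsum_mul_left]
    refine tsum_congr fun m => ?_
    have hfac : (((2*m+1).factorial : ℝ)) ≠ 0 := Nat.cast_ne_zero.mpr (Nat.factorial_ne_zero _)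
    have hmf : ((m.factorial : ℝ)) ≠ 0 := Nat.cast_ne_zero.mpr (Nat.factorial_ne_zero _)
    have hm1f : (((m+1).factorial : ℝ)) ≠ 0 := Nat.cast_ne_zero.mpr (Nat.factorial_ne_zero _)
    have h4 : (4:ℝ) ^ m ≠ 0 := by positivity
    have hW : Wc (2 * m + 1 + 1) = 2 * π * ((2*(m+1)).factorial)
        / (4 ^ (m+1) * ((m+1).factorial) ^ 2) := by
      have : 2 * m + 1 + 1 = 2 * (m + 1) := by ring
      rw [this, Wc_even]
    have hrec1 : ((2*(m+1)).factorial : ℝ) = (2*m+2) * ((2*m+1).factorial : ℝ) := by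
      have : 2 * (m+1) = (2*m+1) + 1 := by ring
      rw [this, Nat.factorial_succ]
      push_cast
      ring
    have hrec2 : (((m+1)).factorial : ℝ) = (m+1) * (m.factorial : ℝ) := by
      rw [Nat.factorial_succ]; push_cast; ring
    show (x ^ (2*m+1) / (2*m+1).factorial) * Wc (2*m+1+1)
        = 2 * π * (x / 2 * (cK m * (x ^ 2 / 4) ^ m))
    rw [hW, cK, div_pow, ← pow_mul, hrec1, hrec2, pow_succ]
    field_simp
    ring
  rw [besselI1, hex, ← tsum_even_add_odd he ho, heven, hodd, zero_add]
  have h2π : (2 * π : ℝ) ≠ 0 := by positivity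
  field_simp

lemma Jfun_radius : (FormalMultilinearSeries.ofScalars ℝ cJ).radius = ⊤ := by
  apply FormalMultilinearSeries.ofScalars_radius_eq_top_of_tendsto
  · exact Filter.Eventually.of_forall fun n => (cJ_pos n).ne'
  · have heq : ∀ n : ℕ, ‖cJ (n+1)‖ / ‖cJ n‖ = (1 / ((n:ℝ)+1)) * (1 / ((n:ℝ)+1)) := by
      intro n
      have hmf : ((n.factorial : ℝ)) ≠ 0 := Nat.cast_ne_zero.mpr (Nat.factorial_ne_zero _)
      have hn1 : ((n:ℝ) + 1) ≠ 0 := by positivity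
      rw [Real.norm_eq_abs, Real.norm_eq_abs, abs_of_pos (cJ_pos _), abs_of_pos (cJ_pos _),
        cJ, cJ, Nat.factorial_succ]
      push_cast
      field_simp
    have hlim : Filter.Tendsto (fun n : ℕ => (1 / ((n:ℝ)+1)) * (1 / ((n:ℝ)+1))) atTop (nhds 0) := by
      have := tendsto_one_div_add_atTop_nhds_zero_nat (𝕜 := ℝ)
      simpa using this.mul this
    exact hlim.congr fun n => (heq n).symm

lemma Jfun_hasFPowerSeries :
    HasFPowerSeriesOnBall Jfun (FormalMultilinearSeries.ofScalars ℝ cJ) 0 ⊤ := by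
  have h := (FormalMultilinearSeries.ofScalars ℝ cJ).hasFPowerSeriesOnBall
    (by rw [Jfun_radius]; exact ENNReal.zero_lt_top)
  rw [Jfun_radius] at h
  have heq : (FormalMultilinearSeries.ofScalars ℝ cJ).sum = Jfun := by
    funext t
    rw [show (FormalMultilinearSeries.ofScalars ℝ cJ).sum = FormalMultilinearSeries.ofScalarsSum cJ from rfl,
      FormalMultilinearSeries.ofScalars_sum_eq]
    simp [Jfun, smul_eq_mul]
  rwa [heq] at h

lemma analyticAt_Jfun (t : ℝ) : AnalyticAt ℝ Jfun t := by
  refine Jfun_hasFPowerSeries.analyticAt_of_mem ?_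
  simp [EMetric.mem_ball, edist_lt_top]

lemma deriv_term_bound (R : ℝ) (hR : 0 ≤ R) (n : ℕ) {y : ℝ} (hy : |y| ≤ R) :
    ‖cJ n * ((n:ℝ) * y ^ (n - 1))‖ ≤ (R + 1) ^ n / n.factorial := by
  cases n with
  | zero => simp
  | succ m =>
    have key : cJ (m+1) * ((m:ℝ)+1) ≤ (((m+1).factorial : ℝ))⁻¹ := by
      have hle : ((m:ℝ)+1) ≤ ((m+1).factorial : ℝ) := by
        exact_mod_cast Nat.self_le_factorial (m+1)
      have hpos : (0:ℝ) < ((m+1).factorial : ℝ) := by exact_mod_cast (m+1).factorial_pos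
      rw [cJ, sq, mul_inv]
      calc ((((m+1).factorial:ℝ))⁻¹ * (((m+1).factorial:ℝ))⁻¹) * ((m:ℝ)+1)
          ≤ ((((m+1).factorial:ℝ))⁻¹ * (((m+1).factorial:ℝ))⁻¹) * ((m+1).factorial:ℝ) := by
            gcongr
        _ = (((m+1).factorial:ℝ))⁻¹ := by field_simp
    have hyb : |y| ^ m ≤ (R + 1) ^ (m+1) := by
      have h1 : |y| ^ m ≤ (R+1) ^ m := pow_le_pow_left₀ (abs_nonneg y) (by linarith) m
      have h2 : (R+1:ℝ) ^ m ≤ (R+1) ^ (m+1) := pow_le_pow_right₀ (by linarith) (Nat.le_succ m)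
      linarith
    rw [norm_mul, norm_mul, Real.norm_eq_abs, Real.norm_eq_abs, Real.norm_eq_abs,
      abs_of_pos (cJ_pos _), Nat.abs_cast, abs_pow]
    have h0 : m + 1 - 1 = m := rfl
    rw [h0, ← mul_assoc, div_eq_mul_inv, mul_comm ((R+1)^(m+1))]
    push_cast
    exact mul_le_mul key hyb (by positivity) (by positivity)

lemma summable_deriv_term (t : ℝ) :
    Summable fun n : ℕ => cJ n * ((n:ℝ) * t ^ (n - 1)) := by
  apply Summable.of_norm_bounded (Real.summable_pow_div_factorial (|t| + 1))
  exact fun n => deriv_term_bound |t| (abs_nonneg t) n le_rfl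

lemma Kfun_eq_deriv_sum (t : ℝ) :
    (∑' n : ℕ, cJ n * ((n:ℝ) * t ^ (n - 1))) = Kfun t := by
  rw [Summable.tsum_eq_zero_add (summable_deriv_term t)]
  simp only [Nat.cast_zero, zero_mul, mul_zero, zero_add]
  rw [Kfun]
  refine tsum_congr fun n => ?_
  have hmf : ((n.factorial : ℝ)) ≠ 0 := Nat.cast_ne_zero.mpr (Nat.factorial_ne_zero _)
  have hm1f : (((n+1).factorial : ℝ)) ≠ 0 := Nat.cast_ne_zero.mpr (Nat.factorial_ne_zero _)
  have h1 : n + 1 - 1 = n := rfl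
  rw [h1, cK, cJ, Nat.factorial_succ]
  push_cast
  field_simp

lemma hasDerivAt_Jfun (t : ℝ) : HasDerivAt Jfun (Kfun t) t := by
  rw [← Kfun_eq_deriv_sum t]
  have hball : t ∈ Metric.ball (0:ℝ) (|t| + 1) := by
    rw [mem_ball_zero_iff, Real.norm_eq_abs]
    linarith
  exact hasDerivAt_tsum_of_isPreconnected
    (Real.summable_pow_div_factorial (|t| + 1 + 1))
    Metric.isOpen_ball (convex_ball (0:ℝ) (|t|+1)).isPreconnected
    (fun n y _ => (hasDerivAt_pow n y).const_mul (cJ n))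
    (fun n y hy => by
      refine deriv_term_bound (|t| + 1) (by positivity) n ?_
      rw [mem_ball_zero_iff, Real.norm_eq_abs] at hy
      exact hy.le)
    hball (summable_J t) hball

lemma analyticAt_rlog {x : ℝ} (hx : 0 < x) : AnalyticAt ℝ Real.log x := by
  have h0 : AnalyticAt ℝ Complex.log (x : ℂ) :=
    (analyticAt_clog (Complex.ofReal_mem_slitPlane.mpr hx)).restrictScalars
  have h1 : AnalyticAt ℝ (fun y : ℝ => Complex.log (Complex.ofRealCLM y)) x :=
    h0.comp (Complex.ofRealCLM.analyticAt x)
  have h2 : AnalyticAt ℝ (fun y : ℝ => Complex.reCLM (Complex.log (Complex.ofRealCLM y))) x :=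
    (Complex.reCLM.analyticAt _).comp h1
  have h3 : (fun y : ℝ => Complex.reCLM (Complex.log (Complex.ofRealCLM y))) = Real.log := by
    funext y
    simpa using Complex.log_ofReal_re y
  rwa [h3] at h2

lemma analyticAt_rsinh (x : ℝ) : AnalyticAt ℝ Real.sinh x := by
  have h : AnalyticAt ℝ (fun y : ℝ => (Real.exp y - Real.exp (-y)) / 2) x := by
    apply AnalyticAt.div
    · exact ((analyticAt_id).rexp).sub ((analyticAt_id.neg).rexp)
    · exact analyticAt_const
    · norm_num
  exact h.congr (Filter.Eventually.of_forall fun y => (Real.sinh_eq y).symm)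

lemma analyticAt_rcosh (x : ℝ) : AnalyticAt ℝ Real.cosh x := by
  have h : AnalyticAt ℝ (fun y : ℝ => (Real.exp y + Real.exp (-y)) / 2) x := by
    apply AnalyticAt.div
    · exact ((analyticAt_id).rexp).add ((analyticAt_id.neg).rexp)
    · exact analyticAt_const
    · norm_num
  exact h.congr (Filter.Eventually.of_forall fun y => (Real.cosh_eq y).symm)

lemma analytic_O2 {f : ℝ → ℝ} (hf : AnalyticAt ℝ f 0) (h0 : f 0 = 0) (h1 : deriv f 0 = 0) :
    f =O[nhds (0:ℝ)] fun x => x ^ 2 := by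
  obtain ⟨p, hp⟩ := hf
  have hc0 : p.coeff 0 = 0 := by
    have h2 := hp.coeff_zero (fun _ => 0)
    rw [h0] at h2
    rw [FormalMultilinearSeries.coeff]
    convert h2 using 2
  have hc1 : p.coeff 1 = 0 := by
    have hd := hp.deriv
    rw [h1] at hd
    have h2 : ((p 1) fun _ => (1:ℝ)) = (1:ℝ) ^ 1 • p.coeff 1 :=
      FormalMultilinearSeries.apply_eq_pow_smul_coeff
    rw [← hd] at h2
    simpa using h2.symm
  have hps : ∀ y : ℝ, p.partialSum 2 y = 0 := by
    intro y
    rw [FormalMultilinearSeries.partialSum]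
    rw [Finset.sum_range_succ, Finset.sum_range_one]
    rw [FormalMultilinearSeries.apply_eq_pow_smul_coeff, FormalMultilinearSeries.apply_eq_pow_smul_coeff,
      hc0, hc1]
    simp
  have hb := hp.isBigO_sub_partialSum_pow 2
  have hb' : f =O[nhds (0:ℝ)] fun y => ‖y‖ ^ 2 := by
    have heq : (fun y : ℝ => f (0 + y) - p.partialSum 2 y) = f := by
      funext y
      rw [zero_add, hps, sub_zero]
    rwa [heq] at hb
  calc f =O[nhds (0:ℝ)] (fun y : ℝ => ‖y‖ ^ 2) := hb'
    _ =O[nhds (0:ℝ)] (fun y : ℝ => y ^ 2) :=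
      isBigO_of_le _ fun y => by simp [abs_pow, sq_abs]

theorem stmt_13 (κ β c : ℝ) (hκ : 0 < κ) (hβ : 0 < β) (hc : c ∈ Set.Ioc (0 : ℝ) 1)
    (R F h : ℝ → ℝ)
    (hR : ∀ η : ℝ, R η = Real.sqrt (κ ^ 2 + β ^ 2 * Real.sinh η ^ 2 +
      2 * κ * β * Real.sinh η * c))
    (hF : ∀ η : ℝ, F η =
      β * Real.cosh η - Real.log (besselI0 (R η)) + Real.log (besselI0 κ))
    (hh : ∀ η : ℝ, h η = 2 * Real.sqrt (β⁻¹ * (besselI1 κ / besselI0 κ) * η * c)) :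
    (fun η : ℝ => F η - β + Real.log (besselI0 (β * h η)))
      =O[nhdsWithin 0 (Set.Ioi 0)] fun η : ℝ => η ^ 2 := by
  obtain ⟨hc0, hc1⟩ := hc
  set m : ℝ := besselI1 κ / besselI0 κ with hm
  have hκ4 : (0:ℝ) ≤ κ ^ 2 / 4 := by positivity
  have hI0κ : besselI0 κ = Jfun (κ ^ 2 / 4) := besselI0_eq κ
  have hI1κ : besselI1 κ = (κ / 2) * Kfun (κ ^ 2 / 4) := besselI1_eq κ
  have hJκpos : 0 < Jfun (κ ^ 2 / 4) := Jfun_pos hκ4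
  have hKκpos : 0 < Kfun (κ ^ 2 / 4) := Kfun_pos hκ4
  have hI0κpos : 0 < besselI0 κ := hI0κ ▸ hJκpos
  have hI1κpos : 0 < besselI1 κ := by rw [hI1κ]; positivity
  have hmpos : 0 < m := div_pos hI1κpos hI0κpos
  -- the analytic comparison function
  set Q : ℝ → ℝ := fun η => κ ^ 2 + β ^ 2 * Real.sinh η ^ 2 + 2 * κ * β * Real.sinh η * c
    with hQ
  set A : ℝ → ℝ := fun η => β ^ 2 * (β⁻¹ * m * η * c) with hA
  set G : ℝ → ℝ := fun η => β * Real.cosh η - Real.log (Jfun (Q η / 4))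
      + Real.log (besselI0 κ) - β + Real.log (Jfun (A η)) with hG
  have hQ0 : Q 0 = κ ^ 2 := by simp [hQ]
  have hA0 : A 0 = 0 := by simp [hA]
  have hQ40 : Q 0 / 4 = κ ^ 2 / 4 := by rw [hQ0]
  have hJQ0pos : 0 < Jfun (Q 0 / 4) := by rw [hQ40]; exact hJκpos
  -- analyticity of G at 0
  have hQan : AnalyticAt ℝ Q 0 := by
    apply AnalyticAt.add
    apply AnalyticAt.add
    · exact analyticAt_const
    · exact analyticAt_const.mul ((analyticAt_rsinh 0).pow 2)
    · exact (analyticAt_const.mul (analyticAt_rsinh 0)).mul analyticAt_const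
  have hQ4an : AnalyticAt ℝ (fun η => Q η / 4) 0 :=
    hQan.div analyticAt_const (by norm_num)
  have hJQan : AnalyticAt ℝ (fun η => Jfun (Q η / 4)) 0 := by
    have h' := AnalyticAt.comp (g := Jfun) (f := fun η => Q η / 4) (x := (0:ℝ)) (analyticAt_Jfun (Q 0 / 4)) hQ4an
    exact h'
  have hlogJQan : AnalyticAt ℝ (fun η => Real.log (Jfun (Q η / 4))) 0 := by
    have h' := AnalyticAt.comp (g := Real.log) (f := fun η => Jfun (Q η / 4)) (x := (0:ℝ)) (analyticAt_rlog (by simpa [hQ40] using hJκpos : (0:ℝ) < Jfun (Q 0 / 4))) hJQan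
    exact h'
  have hAan : AnalyticAt ℝ A 0 := by
    exact analyticAt_const.mul (((analyticAt_const.mul analyticAt_id).mul analyticAt_const))
  have hJA0pos : 0 < Jfun (A 0) := by rw [hA0]; exact Jfun_pos le_rfl
  have hlogJAan : AnalyticAt ℝ (fun η => Real.log (Jfun (A η))) 0 := by
    have h1 : AnalyticAt ℝ (fun η => Jfun (A η)) 0 := by
      have h' := AnalyticAt.comp (g := Jfun) (f := A) (x := (0:ℝ)) (analyticAt_Jfun (A 0)) hAan
      exact h'
    have h' := AnalyticAt.comp (g := Real.log) (f := fun η => Jfun (A η)) (x := (0:ℝ)) (analyticAt_rlog (by simpa [hA0] using (Jfun_pos le_rfl) : (0:ℝ) < Jfun (A 0))) h1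
    exact h'
  have hGan : AnalyticAt ℝ G 0 := by
    apply AnalyticAt.add
    apply AnalyticAt.sub
    apply AnalyticAt.add
    apply AnalyticAt.sub
    · exact analyticAt_const.mul (analyticAt_rcosh 0)
    · exact hlogJQan
    · exact analyticAt_const
    · exact analyticAt_const
    · exact hlogJAan
  -- value at 0
  have hJfun0 : Jfun 0 = 1 := by
    rw [Jfun, tsum_eq_single 0 (fun n hn => by simp [zero_pow hn])]
    simp [cJ]
  have hKfun0 : Kfun 0 = 1 := by
    rw [Kfun, tsum_eq_single 0 (fun n hn => by simp [zero_pow hn])]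
    simp [cK]
  have hG0 : G 0 = 0 := by
    simp only [hG, hA0, hQ40, hJfun0, Real.cosh_zero, Real.log_one, hI0κ]
    ring
  -- derivative at 0
  have hs1 : HasDerivAt Real.sinh 1 0 := by simpa using Real.hasDerivAt_sinh 0
  have hQd : HasDerivAt Q (2 * κ * β * c) 0 := by
    have h2 : HasDerivAt (fun η : ℝ => β ^ 2 * Real.sinh η ^ 2)
        (β ^ 2 * (2 * Real.sinh 0 ^ 1 * 1)) 0 := (hs1.pow 2).const_mul (β ^ 2)
    have h3 : HasDerivAt (fun η : ℝ => 2 * κ * β * Real.sinh η * c)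
        ((2 * κ * β * 1) * c) 0 := (hs1.const_mul (2 * κ * β)).mul_const c
    have h4 := ((hasDerivAt_const (0:ℝ) (κ ^ 2)).add h2).add h3
    refine h4.congr_deriv ?_
    simp
  have hQ4d : HasDerivAt (fun η => Q η / 4) (2 * κ * β * c / 4) 0 := hQd.div_const 4
  have hJQd : HasDerivAt (fun η => Jfun (Q η / 4)) (Kfun (Q 0 / 4) * (2 * κ * β * c / 4)) 0 :=
    (hasDerivAt_Jfun (Q 0 / 4)).comp (h := fun η => Q η / 4) 0 hQ4d
  have hlogJQd : HasDerivAt (fun η => Real.log (Jfun (Q η / 4)))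
      ((Jfun (Q 0 / 4))⁻¹ * (Kfun (Q 0 / 4) * (2 * κ * β * c / 4))) 0 :=
    (Real.hasDerivAt_log hJQ0pos.ne').comp (h := fun η => Jfun (Q η / 4)) 0 hJQd
  have hAd : HasDerivAt A (β ^ 2 * (β⁻¹ * m * c)) 0 := by
    have h1 : HasDerivAt (fun η : ℝ => β⁻¹ * m * η) (β⁻¹ * m) 0 := by
      simpa using (hasDerivAt_id (0:ℝ)).const_mul (β⁻¹ * m)
    exact ((h1.mul_const c).const_mul (β ^ 2))
  have hlogJAd : HasDerivAt (fun η => Real.log (Jfun (A η)))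
      ((Jfun (A 0))⁻¹ * (Kfun (A 0) * (β ^ 2 * (β⁻¹ * m * c)))) 0 :=
    (Real.hasDerivAt_log hJA0pos.ne').comp (h := fun η => Jfun (A η)) 0 ((hasDerivAt_Jfun (A 0)).comp (h := A) 0 hAd)
  have hcoshd : HasDerivAt (fun η : ℝ => β * Real.cosh η) (β * Real.sinh 0) 0 :=
    (Real.hasDerivAt_cosh 0).const_mul β
  have hGd : HasDerivAt G
      (β * Real.sinh 0 - (Jfun (Q 0 / 4))⁻¹ * (Kfun (Q 0 / 4) * (2 * κ * β * c / 4)) + 0 - 0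
        + (Jfun (A 0))⁻¹ * (Kfun (A 0) * (β ^ 2 * (β⁻¹ * m * c)))) 0 := by
    exact ((((hcoshd.sub hlogJQd).add (hasDerivAt_const 0 _)).sub
      (hasDerivAt_const 0 _)).add hlogJAd)
  have hDzero : (β * Real.sinh 0 - (Jfun (Q 0 / 4))⁻¹ * (Kfun (Q 0 / 4) * (2 * κ * β * c / 4)) + 0 - 0
        + (Jfun (A 0))⁻¹ * (Kfun (A 0) * (β ^ 2 * (β⁻¹ * m * c)))) = 0 := by
    rw [Real.sinh_zero, hQ40, hA0, hJfun0, hKfun0, hm, hI1κ, hI0κ]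
    field_simp
    ring
  have hderiv : deriv G 0 = 0 := by
    rw [hGd.deriv, hDzero]
  -- big-O for G
  have hO : G =O[nhds (0:ℝ)] fun η => η ^ 2 := analytic_O2 hGan hG0 hderiv
  -- eventual equality
  have hQev : ∀ᶠ η in nhdsWithin (0:ℝ) (Set.Ioi 0), 0 < Q η := by
    apply Filter.Eventually.filter_mono nhdsWithin_le_nhds
    have hQc : ContinuousAt Q 0 := hQan.continuousAt
    have : Q ⁻¹' Set.Ioi 0 ∈ nhds (0:ℝ) :=
      hQc.preimage_mem_nhds (Ioi_mem_nhds (by rw [hQ0]; positivity))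
    exact this
  have hev : (fun η : ℝ => F η - β + Real.log (besselI0 (β * h η)))
      =ᶠ[nhdsWithin (0:ℝ) (Set.Ioi 0)] G := by
    filter_upwards [hQev, self_mem_nhdsWithin] with η hQη hη
    have hη0 : (0:ℝ) < η := hη
    have ha : (0:ℝ) ≤ β⁻¹ * m * η * c := by positivity
    have hRsq : R η ^ 2 = Q η := by
      rw [hR η]
      exact Real.sq_sqrt hQη.le
    have hbI0R : besselI0 (R η) = Jfun (Q η / 4) := by
      rw [besselI0_eq, hRsq]
    have hbI0h : besselI0 (β * h η) = Jfun (A η) := by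
      rw [besselI0_eq]
      congr 1
      rw [hh η, hA]
      rw [mul_pow, mul_pow, Real.sq_sqrt ha]
      ring
    rw [hF η, hbI0R, hbI0h, hG]
  exact hev.trans_isBigO (hO.mono nhdsWithin_le_nhds)
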